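/- Fix integers J and J₀ with 1 ≤ J₀ ≤ J − 2, and let 𝒵 = {z : Fin J | z = 0 ∨ J₀ ≤ z} with base point 0 ∈ 𝒵. Let q be a probability mass function (PMF) on 𝒵 → Fin J such that every d in the support of q has the base-state default property. Then for every σ : Fin J → 𝒵 such that σ j ≠ j (as elements of Fin J) whenever J₀ ≤ j, one has ∑_{j ∈ Fin J} q({d : 𝒵 → Fin J | d (σ j) = j}) ≤ 1. -/

import Mathlib

/-- The instrument set `𝒵 = {z : Fin J | z = 0 ∨ J₀ ≤ z}`. -/
abbrev Zcal (J J₀ : ℕ) : Type := {z : Fin J // (z : ℕ) = 0 ∨ J₀ ≤ (z : ℕ)}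

/-- Theorem 1 of the paper in the case J₀ > 0, at the level of the
distribution of potential treatments. -/
theorem stmt_5 (J J₀ : ℕ) (hJ₀ : 1 ≤ J₀) (hJ : J₀ + 2 ≤ J)
    (q : PMF (Zcal J J₀ → Fin J))
    (hq : ∀ d ∈ q.support, ∀ z : Zcal J J₀,
      d z = (z : Fin J) ∨ d z = d ⟨⟨0, by omega⟩, Or.inl rfl⟩)
    (σ : Fin J → Zcal J J₀)
    (hσ : ∀ j : Fin J, J₀ ≤ (j : ℕ) → ((σ j : Fin J) ≠ j)) :
    ∑ j : Fin J, q.toOuterMeasure {d : Zcal J J₀ → Fin J | d (σ j) = j} ≤ 1 := by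
  classical
  set z0 : Zcal J J₀ := ⟨⟨0, by omega⟩, Or.inl rfl⟩ with hz0
  simp only [PMF.toOuterMeasure_apply]
  rw [← Summable.tsum_finsetSum (fun j _ => ENNReal.summable)]
  refine le_trans (Summable.tsum_le_tsum (fun d => ?_) ENNReal.summable ENNReal.summable)
    (le_of_eq q.tsum_coe)
  by_cases hd : q d = 0
  · simp [Set.indicator_apply, hd]
  · have hsupp : d ∈ q.support := by simpa [PMF.mem_support_iff] using hd
    have aux : ∀ m : Fin J, d (σ m) = m → d z0 = m := by
      intro m hm
      rcases hq d hsupp (σ m) with h | h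
      · have hmm : ((σ m : Fin J)) = m := by rw [← h, hm]
        rcases (σ m).property with h0' | h0'
        · have : σ m = z0 := Subtype.ext (Fin.ext (by simpa using h0'))
          rw [← this, hm]
        · exact absurd hmm (hσ m (by rwa [hmm] at h0'))
      · rw [← hm, h]
    have key : ∀ j k : Fin J, d (σ j) = j → d (σ k) = k → j = k := by
      intro j k hj hk
      rw [← aux j hj, aux k hk]
    calc ∑ j : Fin J, ({d' : Zcal J J₀ → Fin J | d' (σ j) = j}).indicator q d
        = ∑ j : Fin J, if d (σ j) = j then q d else 0 := by
          simp [Set.indicator_apply, Set.mem_setOf_eq]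
      _ = ∑ j ∈ Finset.univ.filter (fun j : Fin J => d (σ j) = j), q d :=
          (Finset.sum_filter _ _).symm
      _ = (Finset.univ.filter (fun j : Fin J => d (σ j) = j)).card • q d :=
          Finset.sum_const _
      _ ≤ 1 • q d := by
          refine smul_le_smul_of_nonneg_right ?_ zero_le'
          exact Finset.card_le_one.2 fun j hj k hk => by
            simp only [Finset.mem_filter] at hj hk
            exact key j k hj.2 hk.2
      _ = q d := one_smul _ _
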